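/- arXiv:math/0611688 — 2 statements merged into one kernel-verified Lean document; each statement's English description precedes it below -/
import Mathlib

section
/- Let N be a positive integer, let P be the uniform (symmetric Bernoulli) probability measure on {-1,+1}^N, and let F be a real function on {-1,+1}^N. Define for each i the partial Lipschitz seminorm ‖∂_i F‖_∞ = sup over pairs (h, h') agreeing off coordinate i of |F(h)-F(h')|/|h_i - h'_i|, and set ‖∂F‖²_∞ = Σ_{i=1}^N ‖∂_i F‖²_∞. Then for all t > 0, P[F - E(F) ≥ t] ≤ exp(-t² / (4‖∂F‖²_∞)). -/
open Finset Real

lemma sum_cons_decomp (n : ℕ) (f : (Fin (n+1) → Bool) → ℝ) :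
    ∑ ω, f ω = ∑ ω' : Fin n → Bool, (f (Fin.cons true ω') + f (Fin.cons false ω')) := by
  rw [← (Fin.consEquiv (fun _ => Bool)).sum_comp f, Fintype.sum_prod_type_right]
  simp [Fin.consEquiv, Fintype.sum_bool]

lemma key_mgf : ∀ (n : ℕ) (G : (Fin n → Bool) → ℝ) (D : Fin n → ℝ),
    (∀ (i : Fin n) (ω : Fin n → Bool),
      |G (Function.update ω i true) - G (Function.update ω i false)| ≤ 2 * D i) →
    ∀ l : ℝ,
    ∑ ω, Real.exp (l * G ω) ≤
      2 ^ n * Real.exp (l * (∑ ω, G ω) / 2 ^ n + l ^ 2 / 2 * ∑ i, (D i) ^ 2) := by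
  intro n
  induction n with
  | zero =>
    intro G D hD l
    have hu : (Finset.univ : Finset (Fin 0 → Bool)) = {fun i => i.elim0} := by
      apply Finset.eq_singleton_iff_unique_mem.2
      refine ⟨Finset.mem_univ _, fun x _ => ?_⟩
      funext i; exact i.elim0
    rw [hu]
    simp
  | succ n ih =>
    intro G D hD l
    set m : (Fin n → Bool) → ℝ :=
      fun ω' => (G (Fin.cons true ω') + G (Fin.cons false ω')) / 2 with hm
    have hDm : ∀ (i : Fin n) (ω' : Fin n → Bool),
        |m (Function.update ω' i true) - m (Function.update ω' i false)| ≤ 2 * D i.succ := by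
      intro i ω'
      have h1 := hD i.succ (Fin.cons true ω')
      have h2 := hD i.succ (Fin.cons false ω')
      rw [← Fin.cons_update, ← Fin.cons_update] at h1 h2
      simp only [hm]
      have : (G (Fin.cons true (Function.update ω' i true)) + G (Fin.cons false (Function.update ω' i true))) / 2
           - (G (Fin.cons true (Function.update ω' i false)) + G (Fin.cons false (Function.update ω' i false))) / 2
           = ((G (Fin.cons true (Function.update ω' i true)) - G (Fin.cons true (Function.update ω' i false)))
            + (G (Fin.cons false (Function.update ω' i true)) - G (Fin.cons false (Function.update ω' i false)))) / 2 := by ring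
      rw [this]
      calc _ ≤ (|G (Fin.cons true (Function.update ω' i true)) - G (Fin.cons true (Function.update ω' i false))|
            + |G (Fin.cons false (Function.update ω' i true)) - G (Fin.cons false (Function.update ω' i false))|) / 2 := by
              rw [abs_div]
              simp only [abs_two]
              gcongr
              exact abs_add_le _ _
        _ ≤ (2 * D i.succ + 2 * D i.succ) / 2 := by gcongr
        _ = 2 * D i.succ := by ring
    have hd : ∀ ω' : Fin n → Bool,
        |G (Fin.cons true ω') - G (Fin.cons false ω')| ≤ 2 * D 0 := by
      intro ω'
      have := hD 0 (Fin.cons false ω')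
      rwa [Fin.update_cons_zero, Fin.update_cons_zero] at this
    -- pointwise bound
    have hpt : ∀ ω' : Fin n → Bool,
        Real.exp (l * G (Fin.cons true ω')) + Real.exp (l * G (Fin.cons false ω'))
          ≤ 2 * Real.exp (l ^ 2 / 2 * (D 0) ^ 2) * Real.exp (l * m ω') := by
      intro ω'
      set d : ℝ := (G (Fin.cons true ω') - G (Fin.cons false ω')) / 2 with hdd
      have h1 : l * G (Fin.cons true ω') = l * m ω' + l * d := by
        simp only [hm, hdd]; ring
      have h2 : l * G (Fin.cons false ω') = l * m ω' - l * d := by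
        simp only [hm, hdd]; ring
      rw [h1, h2, Real.exp_add, Real.exp_sub]
      have hc : Real.exp (l * d) + Real.exp (-(l * d)) = 2 * Real.cosh (l * d) := by
        rw [Real.cosh_eq]; ring
      have : Real.exp (l * m ω') * Real.exp (l * d) + Real.exp (l * m ω') / Real.exp (l * d)
          = Real.exp (l * m ω') * (2 * Real.cosh (l * d)) := by
        rw [← hc, div_eq_mul_inv, ← Real.exp_neg]; ring
      rw [this]
      have hcosh : Real.cosh (l * d) ≤ Real.exp (l ^ 2 / 2 * (D 0) ^ 2) := by
        calc Real.cosh (l * d) ≤ Real.exp ((l * d) ^ 2 / 2) := Real.cosh_le_exp_half_sq _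
          _ ≤ Real.exp (l ^ 2 / 2 * (D 0) ^ 2) := by
            apply Real.exp_le_exp.2
            have hd2 : d ^ 2 ≤ (D 0) ^ 2 := by
              have := hd ω'
              have habs : |d| ≤ D 0 := by
                rw [hdd, abs_div, abs_two]
                linarith
              calc d ^ 2 = |d| ^ 2 := (sq_abs d).symm
                _ ≤ (D 0) ^ 2 := pow_le_pow_left₀ (abs_nonneg d) habs 2
            calc (l * d) ^ 2 / 2 = l ^ 2 / 2 * d ^ 2 := by ring
              _ ≤ l ^ 2 / 2 * (D 0) ^ 2 := by
                apply mul_le_mul_of_nonneg_left hd2 (by positivity)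
      calc Real.exp (l * m ω') * (2 * Real.cosh (l * d))
          ≤ Real.exp (l * m ω') * (2 * Real.exp (l ^ 2 / 2 * (D 0) ^ 2)) := by
            gcongr
        _ = 2 * Real.exp (l ^ 2 / 2 * (D 0) ^ 2) * Real.exp (l * m ω') := by ring
    have hsum : ∑ ω' : Fin n → Bool, m ω' = (∑ ω, G ω) / 2 := by
      rw [sum_cons_decomp n G]
      simp only [hm]
      rw [Finset.sum_div]
    calc ∑ ω, Real.exp (l * G ω)
        = ∑ ω' : Fin n → Bool,
            (Real.exp (l * G (Fin.cons true ω')) + Real.exp (l * G (Fin.cons false ω'))) :=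
          sum_cons_decomp n (fun ω => Real.exp (l * G ω))
      _ ≤ ∑ ω' : Fin n → Bool, 2 * Real.exp (l ^ 2 / 2 * (D 0) ^ 2) * Real.exp (l * m ω') :=
          Finset.sum_le_sum (fun ω' _ => hpt ω')
      _ = 2 * Real.exp (l ^ 2 / 2 * (D 0) ^ 2) * ∑ ω' : Fin n → Bool, Real.exp (l * m ω') := by
          rw [← Finset.mul_sum]
      _ ≤ 2 * Real.exp (l ^ 2 / 2 * (D 0) ^ 2) *
            (2 ^ n * Real.exp (l * (∑ ω', m ω') / 2 ^ n + l ^ 2 / 2 * ∑ i : Fin n, (D i.succ) ^ 2)) := by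
          have h := ih m (fun i => D i.succ) hDm l
          have hpos : (0:ℝ) ≤ 2 * Real.exp (l ^ 2 / 2 * (D 0) ^ 2) := by positivity
          exact mul_le_mul_of_nonneg_left h hpos
      _ = 2 ^ (n+1) * Real.exp (l * (∑ ω, G ω) / 2 ^ (n+1) + l ^ 2 / 2 * ∑ i : Fin (n+1), (D i) ^ 2) := by
          rw [hsum, Fin.sum_univ_succ]
          have h2 : l * (∑ ω, G ω) / 2 ^ (n+1) + l ^ 2 / 2 * ((D 0) ^ 2 + ∑ i : Fin n, (D i.succ) ^ 2)
              = (l ^ 2 / 2 * (D 0) ^ 2) + (l * ((∑ ω, G ω) / 2) / 2 ^ n + l ^ 2 / 2 * ∑ i : Fin n, (D i.succ) ^ 2) := by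
            rw [pow_succ]; ring
          rw [h2, Real.exp_add, Real.exp_add, pow_succ]
          ring_nf
          rw [Real.exp_add]
          ring

/-- Concentration inequality for Lipschitz functions of i.i.d. symmetric
±1 Bernoulli random variables: if `D i` bounds the partial Lipschitz
seminorm of `F` in coordinate `i`, then
`P[F - E F ≥ t] ≤ exp(-t²/(4 Σ D i²))`. The uniform measure on `{-1,1}^N`
is modelled by counting over `Fin N → Bool`. -/
theorem stmt_0 (N : ℕ) (hN : 0 < N) (F : (Fin N → ℝ) → ℝ) (D : Fin N → ℝ)
    (hD : ∀ i : Fin N, ∀ h h' : Fin N → ℝ,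
      (∀ j : Fin N, j ≠ i → h j = h' j) → |F h - F h'| ≤ D i * |h i - h' i|)
    (t : ℝ) (ht : 0 < t) :
    ((Finset.univ.filter (fun ω : Fin N → Bool =>
        F (fun i => if ω i then (1:ℝ) else -1)
          - (∑ ω' : Fin N → Bool, F (fun i => if ω' i then (1:ℝ) else -1)) / 2 ^ N
        ≥ t)).card : ℝ) / 2 ^ N
      ≤ Real.exp (-(t ^ 2) / (4 * ∑ i : Fin N, (D i) ^ 2)) := by
  classical
  set G : (Fin N → Bool) → ℝ := fun ω => F (fun i => if ω i then (1:ℝ) else -1) with hG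
  have hDG : ∀ (i : Fin N) (ω : Fin N → Bool),
      |G (Function.update ω i true) - G (Function.update ω i false)| ≤ 2 * D i := by
    intro i ω
    have h := hD i (fun j => if Function.update ω i true j then (1:ℝ) else -1)
      (fun j => if Function.update ω i false j then (1:ℝ) else -1)
      (fun j hj => by simp [Function.update_of_ne hj])
    simp only [Function.update_self, if_true, if_false] at h
    calc |G (Function.update ω i true) - G (Function.update ω i false)|
        ≤ D i * |(1:ℝ) - (-1)| := h
      _ = 2 * D i := by norm_num; ring
  set σ2 : ℝ := ∑ i : Fin N, (D i) ^ 2 with hσ2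
  have hσnn : 0 ≤ σ2 := by positivity
  set μ : ℝ := (∑ ω : Fin N → Bool, G ω) / 2 ^ N with hμ
  have hpow : (0:ℝ) < 2 ^ N := by positivity
  set S := Finset.univ.filter (fun ω : Fin N → Bool => G ω - μ ≥ t) with hS
  rcases eq_or_lt_of_le hσnn with hσ0 | hσpos
  · -- trivial case: σ2 = 0, RHS = exp 0 = 1
    have hrhs : Real.exp (-(t ^ 2) / (4 * σ2)) = 1 := by
      rw [← hσ0]
      norm_num
    rw [hrhs]
    rw [div_le_one hpow]
    calc (S.card : ℝ) ≤ ((Finset.univ : Finset (Fin N → Bool)).card : ℝ) := by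
          exact_mod_cast Finset.card_filter_le _ _
      _ = 2 ^ N := by
          rw [Finset.card_univ]
          simp [Fintype.card_fun]
  · set l : ℝ := t / σ2 with hl
    have hlpos : 0 < l := div_pos ht hσpos
    have hcard : (S.card : ℝ) ≤ ∑ ω ∈ S, Real.exp (l * (G ω - μ - t)) := by
      rw [Finset.card_eq_sum_ones S]
      push_cast
      apply Finset.sum_le_sum
      intro ω hω
      have hmem : G ω - μ ≥ t := (Finset.mem_filter.1 hω).2
      apply Real.one_le_exp
      have : 0 ≤ G ω - μ - t := by linarith
      positivity
    have hsub : ∑ ω ∈ S, Real.exp (l * (G ω - μ - t))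
        ≤ ∑ ω : Fin N → Bool, Real.exp (l * (G ω - μ - t)) := by
      apply Finset.sum_le_sum_of_subset_of_nonneg (Finset.filter_subset _ _)
      intro ω _ _
      positivity
    have hsplit : ∑ ω : Fin N → Bool, Real.exp (l * (G ω - μ - t))
        = (∑ ω : Fin N → Bool, Real.exp (l * G ω)) * Real.exp (-(l * (μ + t))) := by
      rw [Finset.sum_mul]
      apply Finset.sum_congr rfl
      intro ω _
      rw [← Real.exp_add]
      congr 1
      ring
    have hkey := key_mgf N G D hDG l
    have hμeq : l * (∑ ω : Fin N → Bool, G ω) / 2 ^ N = l * μ := by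
      rw [hμ]; ring
    rw [hμeq] at hkey
    have hchain : (S.card : ℝ) ≤ 2 ^ N * Real.exp (-(l * t) + l ^ 2 / 2 * σ2) := by
      calc (S.card : ℝ) ≤ ∑ ω ∈ S, Real.exp (l * (G ω - μ - t)) := hcard
        _ ≤ ∑ ω : Fin N → Bool, Real.exp (l * (G ω - μ - t)) := hsub
        _ = (∑ ω : Fin N → Bool, Real.exp (l * G ω)) * Real.exp (-(l * (μ + t))) := hsplit
        _ ≤ (2 ^ N * Real.exp (l * μ + l ^ 2 / 2 * σ2)) * Real.exp (-(l * (μ + t))) := by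
            apply mul_le_mul_of_nonneg_right hkey (Real.exp_nonneg _)
        _ = 2 ^ N * Real.exp (-(l * t) + l ^ 2 / 2 * σ2) := by
            rw [mul_assoc, ← Real.exp_add]
            congr 2
            ring
    have hexp : -(l * t) + l ^ 2 / 2 * σ2 ≤ -(t ^ 2) / (4 * σ2) := by
      rw [hl]
      have h1 : -(t / σ2 * t) + (t / σ2) ^ 2 / 2 * σ2 = -(t ^ 2) / (2 * σ2) := by
        field_simp
        ring
      rw [h1]
      rw [div_le_div_iff₀ (by positivity) (by positivity)]
      nlinarith [sq_nonneg t, hσpos]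
    calc (S.card : ℝ) / 2 ^ N ≤ (2 ^ N * Real.exp (-(l * t) + l ^ 2 / 2 * σ2)) / 2 ^ N := by
          gcongr
      _ = Real.exp (-(l * t) + l ^ 2 / 2 * σ2) := by
          field_simp
      _ ≤ Real.exp (-(t ^ 2) / (4 * σ2)) := Real.exp_le_exp.2 hexp
end

section
/- For every h > 0 and x > 0, the series g(x) = (4/π) Σ_{k=0}^∞ (−1)^k/((2k+1)h²) · exp(−(2k+1)² π² x/(8h²)) converges, g(x) ≥ 0, and ∫₀^∞ g(x) dx = 1; moreover its Laplace transform satisfies ∫₀^∞ e^{−λx} g(x) dx = (1/(h²λ))(1 − 1/cosh(h√(2λ))) for λ > 0. -/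
set_option maxHeartbeats 1000000

open Real MeasureTheory Set Filter Complex

noncomputable section

lemma myIntExp {d : ℝ} (hd : 0 < d) :
    ∫ x in Set.Ioi (0:ℝ), Real.exp (-(d * x)) = 1 / d := by
  have hderiv : ∀ x ∈ Set.Ici (0:ℝ),
      HasDerivAt (fun x => -Real.exp (-(d*x)) / d) (Real.exp (-(d*x))) x := by
    intro x _
    have h1 : HasDerivAt (fun x : ℝ => -(d*x)) (-d) x := by
      have h := ((hasDerivAt_id x).const_mul d).neg; rw [mul_one] at h; exact h
    have h2 := (h1.exp).neg.div_const d
    refine h2.congr_deriv ?_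
    field_simp
  have hint : IntegrableOn (fun x => Real.exp (-(d*x))) (Set.Ioi (0:ℝ)) := by
    simpa [neg_mul] using exp_neg_integrableOn_Ioi 0 hd
  have h3 : Tendsto (fun x : ℝ => d * x) atTop atTop :=
    tendsto_id.const_mul_atTop hd
  have htend : Tendsto (fun x => -Real.exp (-(d*x)) / d) atTop (nhds 0) := by
    have h4 : Tendsto (fun x : ℝ => Real.exp (-(d*x))) atTop (nhds 0) := by
      exact Real.tendsto_exp_atBot.comp (tendsto_neg_atBot_iff.mpr h3)
    simpa using (h4.neg).div_const d
  have := integral_Ioi_of_hasDerivAt_of_tendsto' hderiv hint htend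
  rw [this, mul_zero, neg_zero, Real.exp_zero]
  ring

lemma myIntP (m : ℕ) (b : ℝ) :
    ∫ t in Set.Ioo (0:ℝ) 1, t ^ (2*m) * Real.cos (b * Real.log t)
      = (2*m+1) / ((2*m+1)^2 + b^2) := by
  set c : ℂ := ((2*m : ℝ) : ℂ) + (b : ℂ) * I with hc
  have hcre : c.re = 2*m := by simp [hc]
  have hc1 : c + 1 = ((2*m+1 : ℝ) : ℂ) + (b:ℂ) * I := by push_cast [hc]; ring
  have hc1ne : c + 1 ≠ 0 := by
    intro hcon
    have : (c+1).re = 0 := by rw [hcon]; simp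
    rw [hc1] at this
    simp at this
    nlinarith [this]
  have h1 : ∫ x : ℝ in (0:ℝ)..1, (x:ℂ)^c = 1/(c+1) := by
    rw [integral_cpow (Or.inl (by rw [hcre]; linarith [mul_nonneg (by norm_num : (0:ℝ) ≤ 2) (Nat.cast_nonneg (α := ℝ) m)]))]
    rw [Complex.ofReal_one, Complex.ofReal_zero, Complex.one_cpow, Complex.zero_cpow hc1ne]
    simp
  rw [intervalIntegral.integral_of_le zero_le_one, integral_Ioc_eq_integral_Ioo] at h1
  have key : ∀ t ∈ Set.Ioo (0:ℝ) 1, (t:ℂ)^c =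
      ((t^(2*m) * Real.cos (b * Real.log t) : ℝ) : ℂ)
        + ((t^(2*m) * Real.sin (b * Real.log t) : ℝ) : ℂ) * I := by
    intro t ht
    rw [Complex.cpow_def_of_ne_zero (Complex.ofReal_ne_zero.mpr ht.1.ne'),
      ← Complex.ofReal_log ht.1.le,
      show (↑(Real.log t) : ℂ) * c = ↑((2*m : ℝ) * Real.log t) + ↑(b * Real.log t) * I by
        push_cast [hc]; ring,
      Complex.exp_add_mul_I, ← Complex.ofReal_exp, ← Complex.ofReal_cos, ← Complex.ofReal_sin]
    have he : Real.exp ((2*m : ℝ) * Real.log t) = t ^ (2*m) := by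
      rw [show ((2*m : ℝ)) = ((2*m : ℕ) : ℝ) by push_cast; ring,
        Real.exp_nat_mul, Real.exp_log ht.1]
    rw [he]
    push_cast
    ring
  have hInt : IntegrableOn (fun t : ℝ => (t:ℂ)^c) (Set.Ioo (0:ℝ) 1) := by
    apply Integrable.mono' (g := fun _ => (1:ℝ))
      (integrableOn_const measure_Ioo_lt_top.ne)
    · apply ContinuousOn.aestronglyMeasurable _ measurableSet_Ioo
      apply ContinuousOn.cpow_const Complex.continuous_ofReal.continuousOn
      intro a ha
      exact Complex.ofReal_mem_slitPlane.mpr ha.1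
    · filter_upwards [ae_restrict_mem measurableSet_Ioo] with t ht
      rw [key t ht]
      have h5 : t ^ (2*m) ≤ 1 := pow_le_one₀ ht.1.le ht.2.le
      have h6 : (0:ℝ) < t ^ (2*m) := pow_pos ht.1 _
      calc ‖((t^(2*m) * Real.cos (b * Real.log t) : ℝ) : ℂ)
            + ((t^(2*m) * Real.sin (b * Real.log t) : ℝ) : ℂ) * I‖
          = Real.sqrt ((t^(2*m) * Real.cos (b * Real.log t))^2
              + (t^(2*m) * Real.sin (b * Real.log t))^2) := by
            rw [Complex.norm_def, Complex.normSq_add_mul_I]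
        _ = t ^ (2*m) := by
            rw [show (t^(2*m) * Real.cos (b * Real.log t))^2
              + (t^(2*m) * Real.sin (b * Real.log t))^2 = (t^(2*m))^2 *
                ((Real.sin (b * Real.log t))^2 + (Real.cos (b*Real.log t))^2) by ring,
              Real.sin_sq_add_cos_sq, mul_one, Real.sqrt_sq h6.le]
        _ ≤ 1 := h5
  have h2 : ∫ t in Set.Ioo (0:ℝ) 1, ((t:ℂ)^c).re = (1/(c+1)).re := by
    rw [← h1, ← RCLike.re_to_complex]
    exact integral_re hInt
  have h3 : ∫ t in Set.Ioo (0:ℝ) 1, t ^ (2*m) * Real.cos (b * Real.log t)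
      = ∫ t in Set.Ioo (0:ℝ) 1, ((t:ℂ)^c).re :=
    setIntegral_congr_fun measurableSet_Ioo (fun t ht => by
      rw [key t ht]
      simp only [Complex.add_re, Complex.ofReal_re, Complex.mul_re, Complex.I_re,
        Complex.I_im, Complex.ofReal_im]
      ring)
  rw [h3, h2, hc1, one_div, Complex.inv_re, Complex.normSq_add_mul_I]
  simp

lemma myBetaVal (b : ℝ) :
    Complex.betaIntegral ((1 + b*I)/2) ((1 - b*I)/2) = ↑π / ↑(Real.cosh (π*b/2)) := by
  have hsre : (0:ℝ) < (((1:ℂ) + b*I)/2).re := by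
    rw [show ((1:ℂ) + b*I)/2 = ↑(1/2 : ℝ) + ↑(b/2 : ℝ)*I by push_cast; ring]
    simp
  have htre : (0:ℝ) < (((1:ℂ) - b*I)/2).re := by
    rw [show ((1:ℂ) - b*I)/2 = ↑(1/2 : ℝ) + ↑(-b/2 : ℝ)*I by push_cast; ring]
    simp
  have h1 := Complex.Gamma_mul_Gamma_eq_betaIntegral hsre htre
  rw [show ((1:ℂ) + b*I)/2 + ((1:ℂ) - b*I)/2 = 1 by ring, Complex.Gamma_one, one_mul] at h1
  have h2 := Complex.Gamma_mul_Gamma_one_sub (((1:ℂ) + b*I)/2)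
  rw [show (1:ℂ) - ((1:ℂ) + b*I)/2 = ((1:ℂ) - b*I)/2 by ring] at h2
  rw [← h1, h2]
  congr 1
  rw [show (↑π : ℂ) * (((1:ℂ) + b*I)/2) = ↑(π/2 : ℝ) + (↑(π*b/2 : ℝ))*I by push_cast; ring,
    Complex.sin_add, ← Complex.ofReal_sin, ← Complex.ofReal_cos,
    Real.sin_pi_div_two, Real.cos_pi_div_two, Complex.cos_mul_I,
    Complex.ofReal_cosh]
  simp

lemma mySubst (b : ℝ) :
    (∫ x in Set.Ioo (0:ℝ) 1,
        (x:ℂ) ^ (((1:ℂ) + b*I)/2 - 1) * ((1:ℂ) - x) ^ (((1:ℂ) - b*I)/2 - 1))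
    = ∫ u in Set.Ioi (0:ℝ), ((2/(1+u^2) : ℝ) : ℂ) * Complex.exp (↑(b * Real.log u) * I) := by
  set f : ℝ → ℝ := fun u => u^2/(1+u^2) with hf
  set f' : ℝ → ℝ := fun u => 2*u/(1+u^2)^2 with hf'
  have himg : f '' Set.Ioi 0 = Set.Ioo 0 1 := by
    ext y
    simp only [mem_image, mem_Ioo, mem_Ioi]
    constructor
    · rintro ⟨u, hu, rfl⟩
      have h0 : (0:ℝ) < 1 + u^2 := by positivity
      exact ⟨div_pos (pow_pos hu 2) h0, (div_lt_one h0).mpr (by nlinarith)⟩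
    · rintro ⟨h0, h1⟩
      refine ⟨Real.sqrt (y/(1-y)), Real.sqrt_pos.mpr (div_pos h0 (by linarith)), ?_⟩
      have hsq : Real.sqrt (y/(1-y)) ^ 2 = y/(1-y) :=
        Real.sq_sqrt (le_of_lt (div_pos h0 (by linarith)))
      rw [hf]
      simp only
      rw [hsq]
      have h1y : (1:ℝ) - y ≠ 0 := by linarith
      rw [show 1 + y/(1-y) = 1/(1-y) by field_simp; ring]
      field_simp
  have hder : ∀ u ∈ Set.Ioi (0:ℝ), HasDerivWithinAt f (f' u) (Set.Ioi 0) u := by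
    intro u _
    have h1 : HasDerivAt (fun u : ℝ => u^2) (2*u) u := by simpa using hasDerivAt_pow 2 u
    have h2 : HasDerivAt (fun u : ℝ => 1+u^2) (2*u) u := by simpa using h1.const_add 1
    have h3 := h1.div h2 (by positivity)
    have h4 : (2*u*(1+u^2) - u^2*(2*u))/(1+u^2)^2 = f' u := by
      rw [hf']; field_simp; ring
    rw [← h4]
    exact h3.hasDerivWithinAt
  have hinj : Set.InjOn f (Set.Ioi 0) := by
    intro u hu v hv huv
    simp only [mem_Ioi] at hu hv
    rw [hf] at huv
    simp only at huv
    rw [div_eq_div_iff (by positivity) (by positivity)] at huv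
    have h2 : (u - v) * (u + v) = 0 := by nlinarith
    rcases mul_eq_zero.mp h2 with h | h
    · linarith
    · linarith
  have key := integral_image_eq_integral_abs_deriv_smul measurableSet_Ioi hder hinj
    (fun x : ℝ => (x:ℂ) ^ (((1:ℂ) + b*I)/2 - 1) * ((1:ℂ) - x) ^ (((1:ℂ) - b*I)/2 - 1))
  rw [himg] at key
  rw [key]
  apply setIntegral_congr_fun measurableSet_Ioi
  intro u hu
  simp only [mem_Ioi] at hu
  dsimp only
  have hu2 : (0:ℝ) < 1 + u^2 := by positivity
  have hfu0 : 0 < f u := div_pos (pow_pos hu 2) hu2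
  have hfu1 : f u < 1 := (div_lt_one hu2).mpr (by nlinarith)
  set L := Real.log u with hL
  set M := Real.log (1+u^2) with hM
  have hlogfu : Real.log (f u) = 2*L - M := by
    rw [hf]
    simp only
    rw [Real.log_div (by positivity) (by positivity), Real.log_pow]
    push_cast
    ring
  have hone_sub : (1:ℂ) - ↑(f u) = ↑((1+u^2)⁻¹ : ℝ) := by
    rw [show ((1+u^2)⁻¹ : ℝ) = 1 - f u by rw [hf]; field_simp; ring]
    push_cast
    ring
  have hcp1 : (↑(f u):ℂ) ^ (((1:ℂ) + b*I)/2 - 1)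
      = Complex.exp (↑(2*L - M) * (((1:ℂ) + b*I)/2 - 1)) := by
    rw [Complex.cpow_def_of_ne_zero (Complex.ofReal_ne_zero.mpr hfu0.ne'),
      ← Complex.ofReal_log hfu0.le, hlogfu]
  have hcp2 : ((1:ℂ) - ↑(f u)) ^ (((1:ℂ) - b*I)/2 - 1)
      = Complex.exp (↑(-M) * (((1:ℂ) - b*I)/2 - 1)) := by
    rw [hone_sub, Complex.cpow_def_of_ne_zero
        (Complex.ofReal_ne_zero.mpr (by positivity)),
      ← Complex.ofReal_log (by positivity), Real.log_inv, hM]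
  rw [hcp1, hcp2, ← Complex.exp_add]
  have hexps : (↑(2*L - M) : ℂ) * (((1:ℂ) + b*I)/2 - 1) + (↑(-M):ℂ) * (((1:ℂ) - b*I)/2 - 1)
      = ↑(b*L) * I + ↑(M - L) := by
    push_cast
    ring
  rw [hexps, Complex.exp_add, ← Complex.ofReal_exp,
    Real.exp_sub, Real.exp_log hu2, Real.exp_log hu,
    Complex.real_smul]
  have habs : |f' u| = 2*u/(1+u^2)^2 := _root_.abs_of_pos (by rw [hf']; positivity)
  rw [habs]
  have hr : ((2*u/(1+u^2)^2 : ℝ) : ℂ) * (((1+u^2)/u : ℝ) : ℂ) = ((2/(1+u^2) : ℝ) : ℂ) := by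
    rw [← Complex.ofReal_mul]
    congr 1
    field_simp
  rw [mul_comm (Complex.exp (↑(b*L)*I)) (((1+u^2)/u : ℝ) : ℂ), ← mul_assoc, hr]

lemma myIoiVal (b : ℝ) :
    ∫ u in Set.Ioi (0:ℝ), ((2/(1+u^2) : ℝ) : ℂ) * Complex.exp (↑(b * Real.log u) * I)
      = ↑π / ↑(Real.cosh (π*b/2)) := by
  rw [← mySubst b, ← myBetaVal b]
  rw [Complex.betaIntegral, intervalIntegral.integral_of_le zero_le_one,
    integral_Ioc_eq_integral_Ioo]

lemma myContF (b : ℝ) (s : Set ℝ) (hs : s ⊆ Set.Ioi (0:ℝ)) :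
    ContinuousOn (fun u : ℝ => Real.cos (b * Real.log u) / (1+u^2)) s := by
  apply ContinuousOn.div
  · apply Real.continuous_cos.comp_continuousOn
    apply ContinuousOn.mul continuousOn_const
    apply Real.continuousOn_log.mono
    intro x hx
    exact Set.mem_compl_singleton_iff.mpr (ne_of_gt (hs hx))
  · exact Continuous.continuousOn (by continuity)
  · intro x _; positivity

lemma myIntegrableF (b : ℝ) (s : Set ℝ) (hsm : MeasurableSet s) (hs : s ⊆ Set.Ioi (0:ℝ)) :
    IntegrableOn (fun u : ℝ => Real.cos (b * Real.log u) / (1+u^2)) s := by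
  apply Integrable.mono' (g := fun u : ℝ => (1+u^2)⁻¹)
    (integrable_inv_one_add_sq.restrict)
  · exact ((myContF b s hs).aestronglyMeasurable hsm)
  · apply ae_of_all
    intro u
    rw [norm_div, div_eq_mul_inv]
    rw [Real.norm_eq_abs, Real.norm_eq_abs, _root_.abs_of_pos (by positivity : (0:ℝ) < 1 + u^2)]
    apply mul_le_of_le_one_left (by positivity)
    exact abs_cos_le_one _
    
lemma myIoiReal (b : ℝ) :
    ∫ u in Set.Ioi (0:ℝ), Real.cos (b * Real.log u) / (1+u^2)
      = π/2 * (1 / Real.cosh (π*b/2)) := by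
  have hInt : Integrable (fun u : ℝ => ((2/(1+u^2) : ℝ) : ℂ)
      * Complex.exp (↑(b * Real.log u) * I)) (volume.restrict (Set.Ioi (0:ℝ))) := by
    apply Integrable.mono' (g := fun u : ℝ => 2 * (1+u^2)⁻¹)
      ((integrable_inv_one_add_sq.const_mul 2).restrict)
    · apply ContinuousOn.aestronglyMeasurable _ measurableSet_Ioi
      apply ContinuousOn.mul
      · apply Complex.continuous_ofReal.comp_continuousOn
        exact Continuous.continuousOn (continuous_const.div
          (continuous_const.add (continuous_pow 2)) (fun x => by positivity))
      · apply Complex.continuous_exp.comp_continuousOn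
        apply ContinuousOn.mul _ continuousOn_const
        apply Complex.continuous_ofReal.comp_continuousOn
        apply ContinuousOn.mul continuousOn_const
        apply Real.continuousOn_log.mono
        intro x hx
        exact Set.mem_compl_singleton_iff.mpr (ne_of_gt hx)
    · apply ae_of_all
      intro u
      rw [norm_mul, Complex.norm_exp_ofReal_mul_I, mul_one,
        Complex.norm_real, Real.norm_eq_abs, _root_.abs_of_pos (by positivity : (0:ℝ) < 2/(1+u^2))]
      rw [div_eq_mul_inv]
  have h1 := integral_re hInt
  rw [myIoiVal b] at h1
  have h2 : ∀ u ∈ Set.Ioi (0:ℝ),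
      RCLike.re (((2/(1+u^2) : ℝ) : ℂ) * Complex.exp (↑(b * Real.log u) * I))
        = 2 * (Real.cos (b * Real.log u) / (1+u^2)) := by
    intro u _
    rw [RCLike.re_to_complex, Complex.re_ofReal_mul, Complex.exp_ofReal_mul_I_re]
    ring
  rw [setIntegral_congr_fun measurableSet_Ioi h2] at h1
  rw [MeasureTheory.integral_const_mul] at h1
  have h3 : (↑π / ↑(Real.cosh (π*b/2)) : ℂ).re = π / Real.cosh (π*b/2) := by
    rw [← Complex.ofReal_div, Complex.ofReal_re]
  rw [RCLike.re_to_complex] at h1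
  rw [h3] at h1
  have hc : Real.cosh (π*b/2) ≠ 0 := (Real.cosh_pos _).ne'
  field_simp at h1 ⊢
  linarith

lemma myInvSym (b : ℝ) :
    ∫ u in Set.Ioi (1:ℝ), Real.cos (b * Real.log u) / (1+u^2)
      = ∫ u in Set.Ioo (0:ℝ) 1, Real.cos (b * Real.log u) / (1+u^2) := by
  have hder : ∀ u ∈ Set.Ioo (0:ℝ) 1, HasDerivWithinAt (fun u : ℝ => u⁻¹)
      (-(u^2)⁻¹) (Set.Ioo 0 1) u := by
    intro u hu
    exact (hasDerivAt_inv hu.1.ne').hasDerivWithinAt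
  have hinj : Set.InjOn (fun u : ℝ => u⁻¹) (Set.Ioo 0 1) := by
    intro u hu v hv huv
    simp only at huv
    exact inv_injective huv
  have himg : (fun u : ℝ => u⁻¹) '' Set.Ioo 0 1 = Set.Ioi 1 := by
    ext y
    simp only [mem_image, mem_Ioo, mem_Ioi]
    constructor
    · rintro ⟨u, ⟨h0, h1⟩, rfl⟩
      exact (one_lt_inv₀ h0).mpr h1
    · intro hy
      refine ⟨y⁻¹, ⟨by positivity, ?_⟩, by rw [inv_inv]⟩
      exact inv_lt_one_of_one_lt₀ hy
  have key := integral_image_eq_integral_abs_deriv_smul measurableSet_Ioo hder hinj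
    (fun u : ℝ => Real.cos (b * Real.log u) / (1+u^2))
  rw [himg] at key
  rw [key]
  apply setIntegral_congr_fun measurableSet_Ioo
  intro u hu
  dsimp only
  rw [Real.log_inv, mul_neg, Real.cos_neg, _root_.abs_neg, _root_.abs_of_pos
    (inv_pos.mpr (pow_pos hu.1 2)), smul_eq_mul]
  have hu0 : u ≠ 0 := hu.1.ne'
  field_simp
  try ring
  try exact Or.inl trivial

lemma myIntK (b : ℝ) :
    ∫ t in Set.Ioo (0:ℝ) 1, Real.cos (b * Real.log t) / (1+t^2)
      = π/4 * (1 / Real.cosh (π*b/2)) := by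
  have hsplit : ∫ u in Set.Ioi (0:ℝ), Real.cos (b * Real.log u) / (1+u^2)
      = (∫ u in Set.Ioc (0:ℝ) 1, Real.cos (b * Real.log u) / (1+u^2))
        + ∫ u in Set.Ioi (1:ℝ), Real.cos (b * Real.log u) / (1+u^2) := by
    rw [← Set.Ioc_union_Ioi_eq_Ioi (zero_le_one (α := ℝ))]
    exact setIntegral_union (Set.Ioc_disjoint_Ioi le_rfl) measurableSet_Ioi
      (myIntegrableF b _ measurableSet_Ioc (Set.Ioc_subset_Ioi_self))
      (myIntegrableF b _ measurableSet_Ioi (fun x hx => Set.mem_Ioi.mpr (lt_trans zero_lt_one hx)))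
  rw [myIoiReal b, myInvSym b, integral_Ioc_eq_integral_Ioo] at hsplit
  linarith

lemma myIntArctan : ∫ t in Set.Ioo (0:ℝ) 1, 1/(1+t^2) = π/4 := by
  rw [← integral_Ioc_eq_integral_Ioo, ← intervalIntegral.integral_of_le zero_le_one,
    integral_one_div_one_add_sq, Real.arctan_one, Real.arctan_zero]
  ring

lemma myBddInt {f : ℝ → ℝ} (hc : ContinuousOn f (Set.Ioo (0:ℝ) 1)) (C : ℝ)
    (hC : ∀ t ∈ Set.Ioo (0:ℝ) 1, |f t| ≤ C) : IntegrableOn f (Set.Ioo (0:ℝ) 1) := by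
  apply Integrable.mono' (g := fun _ => C) (integrableOn_const measure_Ioo_lt_top.ne)
    (hc.aestronglyMeasurable measurableSet_Ioo)
  filter_upwards [ae_restrict_mem measurableSet_Ioo] with t ht
  exact hC t ht

lemma myContLog (b : ℝ) : ContinuousOn (fun t : ℝ => Real.cos (b * Real.log t))
    (Set.Ioo (0:ℝ) 1) := by
  apply Real.continuous_cos.comp_continuousOn
  apply ContinuousOn.mul continuousOn_const
  apply Real.continuousOn_log.mono
  intro x hx
  exact Set.mem_compl_singleton_iff.mpr (ne_of_gt hx.1)

lemma myTermInt (b : ℝ) (hb : 0 < b) (k : ℕ) :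
    ∫ t in Set.Ioo (0:ℝ) 1, (t^(2*k) - t^(2*k) * Real.cos (b*Real.log t))
      = b^2 / ((2*k+1) * ((2*k+1)^2 + b^2)) := by
  have hm : (0:ℝ) < 2*k+1 := by positivity
  have hI1 : ∫ t in Set.Ioo (0:ℝ) 1, t^(2*k) = 1/(2*k+1) := by
    have h := myIntP k 0
    simp only [zero_mul, Real.cos_zero, mul_one] at h
    rw [h]
    field_simp
    try ring
  have hInt1 : IntegrableOn (fun t : ℝ => t^(2*k)) (Set.Ioo (0:ℝ) 1) :=
    myBddInt (continuous_pow _).continuousOn 1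
      (fun t ht => by rw [_root_.abs_of_nonneg (pow_nonneg ht.1.le _)]; exact pow_le_one₀ ht.1.le ht.2.le)
  have hIntc : IntegrableOn (fun t : ℝ => t^(2*k) * Real.cos (b*Real.log t))
      (Set.Ioo (0:ℝ) 1) := by
    apply myBddInt (ContinuousOn.mul (continuous_pow _).continuousOn (myContLog b)) 1
    intro t ht
    simp only [Pi.mul_apply]; rw [_root_.abs_mul]
    calc |t^(2*k)| * |Real.cos (b*Real.log t)| ≤ 1 * 1 := by
          apply mul_le_mul _ (Real.abs_cos_le_one _) (abs_nonneg _) zero_le_one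
          rw [_root_.abs_of_nonneg (pow_nonneg ht.1.le _)]
          exact pow_le_one₀ ht.1.le ht.2.le
      _ = 1 := mul_one 1
  rw [MeasureTheory.integral_sub hInt1 hIntc, hI1, myIntP k b]
  have h2 : ((2:ℝ)*k+1)^2 + b^2 > 0 := by positivity
  field_simp
  ring

lemma mySeriesII (b : ℝ) (hb : 0 < b) :
    ∑' k : ℕ, (-1:ℝ)^k / ((2*k+1) * ((2*k+1)^2 + b^2))
      = π/(4*b^2) * (1 - 1/Real.cosh (π*b/2)) := by
  set F : ℕ → ℝ → ℝ :=
    fun k t => ((-1:ℝ)^k/b^2) * (t^(2*k) - t^(2*k) * Real.cos (b*Real.log t)) with hF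
  have hb2 : (0:ℝ) < b^2 := by positivity
  have hnonneg : ∀ k, ∀ t ∈ Set.Ioo (0:ℝ) 1,
      0 ≤ t^(2*k) - t^(2*k) * Real.cos (b*Real.log t) := by
    intro k t ht
    have h1 : Real.cos (b*Real.log t) ≤ 1 := Real.cos_le_one _
    nlinarith [pow_pos ht.1 (2*k)]
  have hFint : ∀ k, Integrable (F k) (volume.restrict (Set.Ioo (0:ℝ) 1)) := by
    intro k
    refine myBddInt ?_ ((2:ℝ)/b^2) ?_
    · apply ContinuousOn.mul continuousOn_const
      exact ContinuousOn.sub (continuous_pow _).continuousOn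
        (ContinuousOn.mul (continuous_pow _).continuousOn (myContLog b))
    · intro t ht
      simp only [hF]
      rw [_root_.abs_mul, _root_.abs_div, _root_.abs_pow, _root_.abs_neg, _root_.abs_one, one_pow, _root_.abs_of_pos hb2]
      rw [_root_.abs_of_nonneg (hnonneg k t ht)]
      rw [div_mul_eq_mul_div, div_le_div_iff₀ hb2 hb2]
      have h1 : Real.cos (b*Real.log t) ≥ -1 := Real.neg_one_le_cos _
      have h2 : t^(2*k) ≤ 1 := pow_le_one₀ ht.1.le ht.2.le
      have h3 : (0:ℝ) < t^(2*k) := pow_pos ht.1 _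
      have h9 : t^(2*k) * (1 - Real.cos (b*Real.log t)) ≤ 1 * 2 :=
        mul_le_mul h2 (by linarith) (by linarith [Real.cos_le_one (b*Real.log t)]) zero_le_one
      nlinarith
  have hFval : ∀ k, ∫ t in Set.Ioo (0:ℝ) 1, F k t
      = (-1:ℝ)^k / ((2*k+1) * ((2*k+1)^2 + b^2)) := by
    intro k
    simp only [hF]
    rw [MeasureTheory.integral_const_mul, myTermInt b hb k]
    have hm : ((2:ℝ)*k+1) * ((2*k+1)^2 + b^2) > 0 := by positivity
    field_simp
    try ring
  have hFnorm : ∀ k, ∫ t in Set.Ioo (0:ℝ) 1, ‖F k t‖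
      = 1 / ((2*k+1) * ((2*k+1)^2 + b^2)) := by
    intro k
    have : ∀ t ∈ Set.Ioo (0:ℝ) 1, ‖F k t‖
        = (1/b^2) * (t^(2*k) - t^(2*k) * Real.cos (b*Real.log t)) := by
      intro t ht
      simp only [hF]
      rw [Real.norm_eq_abs, _root_.abs_mul, _root_.abs_div, _root_.abs_pow, _root_.abs_neg, _root_.abs_one, one_pow,
        _root_.abs_of_pos hb2, _root_.abs_of_nonneg (hnonneg k t ht)]
    rw [setIntegral_congr_fun measurableSet_Ioo this, MeasureTheory.integral_const_mul,
      myTermInt b hb k]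
    have hm : ((2:ℝ)*k+1) * ((2*k+1)^2 + b^2) > 0 := by positivity
    field_simp
  have hsummable : Summable (fun k : ℕ => ∫ t in Set.Ioo (0:ℝ) 1, ‖F k t‖) := by
    have hbig : Summable (fun n : ℕ => 1/((n:ℝ)+1)^3) := by
      have h0 : Summable (fun n : ℕ => 1/(n:ℝ)^3) :=
        summable_one_div_nat_pow.mpr (by norm_num)
      have h1 := (summable_nat_add_iff 1).mpr h0
      simpa using h1
    apply Summable.of_nonneg_of_le _ _ hbig
    · intro k
      rw [hFnorm k]
      positivity
    · intro k
      rw [hFnorm k]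
      have hk0 : (0:ℝ) ≤ (k:ℝ) := Nat.cast_nonneg k
      have h2 : ((k:ℝ)+1) ≤ 2*(k:ℝ)+1 := by linarith
      have h2sq : ((k:ℝ)+1)^2 ≤ (2*(k:ℝ)+1)^2 := by nlinarith
      have hmm := mul_le_mul h2 h2sq (by positivity) (by linarith)
      have h1 : ((k:ℝ)+1)^3 ≤ (2*(k:ℝ)+1) * ((2*(k:ℝ)+1)^2 + b^2) := by
        nlinarith [sq_nonneg b, mul_nonneg (by linarith : (0:ℝ) ≤ 2*(k:ℝ)+1) (sq_nonneg b)]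
      apply one_div_le_one_div_of_le (by positivity)
      exact h1
  have hkey := MeasureTheory.integral_tsum_of_summable_integral_norm hFint hsummable
  have hpt : ∀ t ∈ Set.Ioo (0:ℝ) 1, ∑' k, F k t
      = (1/b^2) * (1/(1+t^2)) - (1/b^2) * (Real.cos (b*Real.log t)/(1+t^2)) := by
    intro t ht
    have ht2 : |(-(t^2) : ℝ)| < 1 := by
      rw [_root_.abs_neg, _root_.abs_of_nonneg (sq_nonneg t)]
      nlinarith [ht.1, ht.2]
    have h5 : ∀ k : ℕ, F k t = (-(t^2))^k * ((1 - Real.cos (b*Real.log t))/b^2) := by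
      intro k
      simp only [hF]
      rw [neg_pow, pow_mul]
      ring
    rw [tsum_congr h5, tsum_mul_right, tsum_geometric_of_abs_lt_one ht2]
    have h6 : (1:ℝ) - -(t^2) = 1 + t^2 := by ring
    rw [h6]
    have h7 : (1:ℝ) + t^2 ≠ 0 := by positivity
    field_simp
    try ring
    try exact Or.inl trivial
  rw [tsum_congr hFval] at hkey
  rw [hkey, setIntegral_congr_fun measurableSet_Ioo hpt]
  have hint1 : IntegrableOn (fun t : ℝ => (1/b^2) * (1/(1+t^2))) (Set.Ioo (0:ℝ) 1) := by
    refine myBddInt ?_ (1/b^2) ?_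
    · apply ContinuousOn.mul continuousOn_const
      exact Continuous.continuousOn (continuous_const.div
        (continuous_const.add (continuous_pow 2)) (fun x => by positivity))
    · intro t ht
      rw [_root_.abs_mul, _root_.abs_of_pos (by positivity : (0:ℝ) < 1/b^2)]
      have : |1/(1+t^2)| ≤ 1 := by
        rw [_root_.abs_of_pos (by positivity : (0:ℝ) < 1/(1+t^2))]
        rw [div_le_one (by positivity)]
        nlinarith [sq_nonneg t]
      nlinarith [abs_nonneg (1/(1+t^2)), (by positivity : (0:ℝ) < 1/b^2)]
  have hint2 : IntegrableOn (fun t : ℝ => (1/b^2) * (Real.cos (b*Real.log t)/(1+t^2)))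
      (Set.Ioo (0:ℝ) 1) := by
    refine myBddInt ?_ (1/b^2) ?_
    · apply ContinuousOn.mul continuousOn_const
      apply ContinuousOn.div (myContLog b)
        (Continuous.continuousOn (by continuity)) (fun t _ => by positivity)
    · intro t ht
      rw [_root_.abs_mul, _root_.abs_of_pos (by positivity : (0:ℝ) < 1/b^2), _root_.abs_div]
      have h8 : |Real.cos (b*Real.log t)| / |1+t^2| ≤ 1 := by
        rw [_root_.abs_of_pos (by positivity : (0:ℝ) < 1+t^2), div_le_one (by positivity)]
        calc |Real.cos (b*Real.log t)| ≤ 1 := Real.abs_cos_le_one _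
          _ ≤ 1 + t^2 := by nlinarith [sq_nonneg t]
      nlinarith [(by positivity : (0:ℝ) < 1/b^2),
        abs_nonneg (Real.cos (b*Real.log t)), abs_pos.mpr (by positivity : (1:ℝ)+t^2 ≠ 0)]
  rw [MeasureTheory.integral_sub hint1 hint2, MeasureTheory.integral_const_mul,
    MeasureTheory.integral_const_mul, myIntArctan, myIntK b]
  have hc : Real.cosh (π*b/2) ≠ 0 := (Real.cosh_pos _).ne'
  field_simp

lemma myQlim : Filter.Tendsto (fun u : ℝ => (1 - 1/Real.cosh u)/u^2)
    (nhdsWithin 0 (Set.Ioi 0)) (nhds (1/2)) := by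
  have hslope : Filter.Tendsto (fun v : ℝ => Real.sinh v / v)
      (nhdsWithin 0 {(0:ℝ)}ᶜ) (nhds 1) := by
    have h := Real.hasDerivAt_sinh 0
    rw [Real.cosh_zero] at h
    have h2 := hasDerivAt_iff_tendsto_slope.mp h
    have h3 : ∀ v : ℝ, slope Real.sinh 0 v = Real.sinh v / v := by
      intro v
      rw [slope_def_field]
      simp
    exact Filter.Tendsto.congr h3 h2
  have hhalf : Filter.Tendsto (fun u : ℝ => u/2)
      (nhdsWithin 0 (Set.Ioi 0)) (nhdsWithin 0 {(0:ℝ)}ᶜ) := by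
    apply tendsto_nhdsWithin_of_tendsto_nhds_of_eventually_within
    · have h4 : Filter.Tendsto (fun u : ℝ => u/2) (nhds (0:ℝ)) (nhds (0:ℝ)) := by
        simpa using ((continuous_id :  Continuous (id : ℝ → ℝ)).div_const 2).tendsto (0:ℝ)
      exact h4.mono_left nhdsWithin_le_nhds
    · filter_upwards [self_mem_nhdsWithin] with u hu
      exact Set.mem_compl_singleton_iff.mpr (div_pos hu two_pos).ne'
  have hs2 : Filter.Tendsto (fun u : ℝ => Real.sinh (u/2)/(u/2))
      (nhdsWithin 0 (Set.Ioi 0)) (nhds 1) := hslope.comp hhalf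
  have hcosh : Filter.Tendsto (fun u : ℝ => Real.cosh u)
      (nhdsWithin 0 (Set.Ioi 0)) (nhds 1) := by
    have h5 := Real.continuous_cosh.tendsto 0
    rw [Real.cosh_zero] at h5
    exact h5.mono_left nhdsWithin_le_nhds
  have hmain := ((tendsto_const_nhds (x := (1/2:ℝ))).mul (hs2.pow 2)).mul
    (hcosh.inv₀ one_ne_zero)
  norm_num at hmain
  apply hmain.congr'
  filter_upwards [self_mem_nhdsWithin] with u hu
  have hu0 : u ≠ 0 := ne_of_gt hu
  have hcp := Real.cosh_pos u
  have hid : Real.cosh u = 1 + 2 * Real.sinh (u/2)^2 := by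
    have h6 := Real.cosh_two_mul (u/2)
    rw [show 2*(u/2) = u by ring] at h6
    rw [h6, Real.cosh_sq]
    ring
  have key : Real.cosh u - 1 = 2*Real.sinh (u/2)^2 := by rw [hid]; ring
  rw [show (1:ℝ) - 1/Real.cosh u = (Real.cosh u - 1)/Real.cosh u by field_simp, key]
  field_simp

lemma myBeta3 : ∑' k : ℕ, (-1:ℝ)^k/(2*(k:ℝ)+1)^3 = π^3/32 := by
  have hbound : Summable (fun k : ℕ => 1/(2*(k:ℝ)+1)^3) := by
    have hbig : Summable (fun n : ℕ => 1/((n:ℝ)+1)^3) := by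
      have h0 : Summable (fun n : ℕ => 1/(n:ℝ)^3) :=
        summable_one_div_nat_pow.mpr (by norm_num)
      have h1 := (summable_nat_add_iff 1).mpr h0
      simpa using h1
    apply Summable.of_nonneg_of_le _ _ hbig
    · intro k; positivity
    · intro k
      have hk0 : (0:ℝ) ≤ (k:ℝ) := Nat.cast_nonneg k
      apply one_div_le_one_div_of_le (by positivity)
      have : ((k:ℝ)+1) ≤ 2*(k:ℝ)+1 := by linarith
      exact pow_le_pow_left₀ (by positivity) this 3
  have htend : Filter.Tendsto
      (fun b : ℝ => ∑' k : ℕ, (-1:ℝ)^k / ((2*k+1) * ((2*k+1)^2 + b^2)))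
      (nhdsWithin 0 (Set.Ioi 0)) (nhds (∑' k : ℕ, (-1:ℝ)^k/(2*(k:ℝ)+1)^3)) := by
    apply tendsto_tsum_of_dominated_convergence hbound
    · intro k
      have hc : Continuous (fun b : ℝ => (-1:ℝ)^k / ((2*(k:ℝ)+1) * ((2*(k:ℝ)+1)^2 + b^2))) := by
        apply Continuous.div continuous_const
        · continuity
        · intro b; positivity
      have h7 := (hc.tendsto 0).mono_left
        (nhdsWithin_le_nhds (s := Set.Ioi (0:ℝ)))
      have h8 : (-1:ℝ)^k / ((2*(k:ℝ)+1) * ((2*(k:ℝ)+1)^2 + (0:ℝ)^2))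
          = (-1:ℝ)^k/(2*(k:ℝ)+1)^3 := by
        rw [show (2*(k:ℝ)+1) * ((2*(k:ℝ)+1)^2 + (0:ℝ)^2) = (2*(k:ℝ)+1)^3 by ring]
      rw [h8] at h7
      exact h7
    · filter_upwards [self_mem_nhdsWithin] with b hb
      intro k
      rw [Real.norm_eq_abs, _root_.abs_div, _root_.abs_pow, _root_.abs_neg, _root_.abs_one, one_pow]
      rw [_root_.abs_of_pos (by positivity : (0:ℝ) < (2*(k:ℝ)+1) * ((2*(k:ℝ)+1)^2 + b^2))]
      apply one_div_le_one_div_of_le (by positivity)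
      nlinarith [mul_nonneg (by positivity : (0:ℝ) ≤ 2*(k:ℝ)+1) (sq_nonneg b)]
  have htend2 : Filter.Tendsto (fun b : ℝ => π/(4*b^2) * (1 - 1/Real.cosh (π*b/2)))
      (nhdsWithin 0 (Set.Ioi 0)) (nhds (π^3/32)) := by
    have hcomp : Filter.Tendsto (fun b : ℝ => π*b/2)
        (nhdsWithin 0 (Set.Ioi 0)) (nhdsWithin 0 (Set.Ioi 0)) := by
      apply tendsto_nhdsWithin_of_tendsto_nhds_of_eventually_within
      · have h9 : Filter.Tendsto (fun b : ℝ => π*b/2) (nhds (0:ℝ)) (nhds (0:ℝ)) := by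
          have hcc : Continuous (fun b : ℝ => π*b/2) := by continuity
          have := hcc.tendsto (0:ℝ)
          simpa using this
        exact h9.mono_left nhdsWithin_le_nhds
      · filter_upwards [self_mem_nhdsWithin] with b hb
        exact div_pos (mul_pos Real.pi_pos hb) two_pos
    have hQ := myQlim.comp hcomp
    have h10 := hQ.const_mul (π^3/16)
    have h11 : (π:ℝ)^3/16 * (1/2) = π^3/32 := by ring
    rw [h11] at h10
    apply h10.congr'
    filter_upwards [self_mem_nhdsWithin] with b hb
    show (π:ℝ)^3/16 * ((1 - 1/Real.cosh (π*b/2))/(π*b/2)^2)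
      = π/(4*b^2) * (1 - 1/Real.cosh (π*b/2))
    have hb0 : b ≠ 0 := ne_of_gt hb
    have hpi : (π:ℝ) ≠ 0 := Real.pi_ne_zero
    field_simp
    ring
  have hE : (fun b : ℝ => ∑' k : ℕ, (-1:ℝ)^k / ((2*k+1) * ((2*k+1)^2 + b^2)))
      =ᶠ[nhdsWithin 0 (Set.Ioi 0)]
      (fun b : ℝ => π/(4*b^2) * (1 - 1/Real.cosh (π*b/2))) := by
    filter_upwards [self_mem_nhdsWithin] with b hb
    exact mySeriesII b hb
  exact tendsto_nhds_unique (htend.congr' hE) htend2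

/-- The Kesten–Golosov density
`g(x) = (4/π) Σ_{k≥0} (-1)^k/((2k+1)h²) exp(-(2k+1)²π²x/(8h²))`:
the series converges, `g ≥ 0`, `∫₀^∞ g = 1`, and its Laplace transform is
`(1/(h²λ))(1 - 1/cosh(h√(2λ)))`. -/
theorem stmt_6 (h : ℝ) (hh : 0 < h)
    (g : ℝ → ℝ)
    (hg : ∀ x : ℝ, g x = 4 / π *
      ∑' k : ℕ, (-1 : ℝ) ^ k / ((2 * k + 1) * h ^ 2) *
        Real.exp (-((2 * k + 1) ^ 2 * π ^ 2 * x) / (8 * h ^ 2))) :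
    (∀ x : ℝ, 0 < x → Summable (fun k : ℕ =>
        (-1 : ℝ) ^ k / ((2 * k + 1) * h ^ 2) *
          Real.exp (-((2 * k + 1) ^ 2 * π ^ 2 * x) / (8 * h ^ 2)))) ∧
    (∀ x : ℝ, 0 < x → 0 ≤ g x) ∧
    ((∫ x in Set.Ioi (0 : ℝ), g x) = 1) ∧
    (∀ l : ℝ, 0 < l →
      (∫ x in Set.Ioi (0 : ℝ), Real.exp (-l * x) * g x)
        = 1 / (h ^ 2 * l) * (1 - 1 / Real.cosh (h * Real.sqrt (2 * l)))) := by
  have hh2 : (0:ℝ) < h^2 := by positivity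
  set A : ℝ := π^2/(8*h^2) with hAdef
  have hA : (0:ℝ) < A := by rw [hAdef]; positivity
  -- Part 1 : summability
  have hsum : ∀ x : ℝ, 0 < x → Summable (fun k : ℕ =>
      (-1 : ℝ) ^ k / ((2 * k + 1) * h ^ 2) *
        Real.exp (-((2 * k + 1) ^ 2 * π ^ 2 * x) / (8 * h ^ 2))) := by
    intro x hx
    have hAx : (0:ℝ) < A*x := mul_pos hA hx
    have hr0 : (0:ℝ) ≤ Real.exp (-(2*(A*x))) := (Real.exp_pos _).le
    have hr1 : Real.exp (-(2*(A*x))) < 1 := by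
      rw [show (1:ℝ) = Real.exp 0 by rw [Real.exp_zero]]
      exact Real.exp_lt_exp.mpr (by linarith)
    apply Summable.of_norm_bounded
      (g := fun k : ℕ => (1/h^2) * (Real.exp (-(2*(A*x))))^k)
      ((summable_geometric_of_lt_one hr0 hr1).mul_left _)
    intro k
    have hk0 : (0:ℝ) ≤ (k:ℝ) := Nat.cast_nonneg k
    rw [Real.norm_eq_abs, _root_.abs_mul, _root_.abs_div, _root_.abs_pow, _root_.abs_neg, _root_.abs_one, one_pow,
      _root_.abs_of_pos (by positivity : (0:ℝ) < (2*(k:ℝ)+1)*h^2),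
      _root_.abs_of_pos (Real.exp_pos _)]
    have hexp1 : -((2*(k:ℝ)+1)^2*π^2*x)/(8*h^2) = -((2*(k:ℝ)+1)^2*(A*x)) := by
      rw [hAdef]; field_simp
    have hexp2 : Real.exp (-((2*(k:ℝ)+1)^2*(A*x))) ≤ Real.exp (-((2*(k:ℝ)+1)*(A*x))) := by
      apply Real.exp_le_exp.mpr
      have : (2*(k:ℝ)+1) ≤ (2*(k:ℝ)+1)^2 := by nlinarith
      nlinarith
    have hexp3 : Real.exp (-((2*(k:ℝ)+1)*(A*x)))
        = Real.exp (-(A*x)) * (Real.exp (-(2*(A*x))))^k := by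
      rw [← Real.exp_nat_mul, ← Real.exp_add]
      congr 1
      ring
    calc 1/((2*(k:ℝ)+1)*h^2) * Real.exp (-((2*(k:ℝ)+1)^2*π^2*x)/(8*h^2))
        ≤ (1/h^2) * Real.exp (-((2*(k:ℝ)+1)^2*(A*x))) := by
          rw [hexp1]
          apply mul_le_mul _ le_rfl (Real.exp_pos _).le (by positivity)
          rw [div_le_div_iff₀ (by positivity) (by positivity)]
          nlinarith
      _ ≤ (1/h^2) * (Real.exp (-(A*x)) * (Real.exp (-(2*(A*x))))^k) := by
          rw [← hexp3]
          exact mul_le_mul_of_nonneg_left hexp2 (by positivity)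
      _ ≤ (1/h^2) * (1 * (Real.exp (-(2*(A*x))))^k) := by
          apply mul_le_mul_of_nonneg_left _ (by positivity)
          apply mul_le_mul_of_nonneg_right _ (by positivity)
          rw [show (1:ℝ) = Real.exp 0 by rw [Real.exp_zero]]
          exact Real.exp_le_exp.mpr (by linarith)
      _ = (1/h^2) * (Real.exp (-(2*(A*x))))^k := by rw [one_mul]
  -- Part 2 : nonnegativity
  have hpos : ∀ x : ℝ, 0 < x → 0 ≤ g x := by
    intro x hx
    rw [hg x]
    apply mul_nonneg (by positivity)
    set F : ℕ → ℝ := fun k => (-1 : ℝ) ^ k / ((2 * k + 1) * h ^ 2) *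
        Real.exp (-((2 * k + 1) ^ 2 * π ^ 2 * x) / (8 * h ^ 2)) with hFdef
    have hS : Summable F := hsum x hx
    have he : Summable (fun k => F (2*k)) :=
      hS.comp_injective (fun a b hab => by omega)
    have ho : Summable (fun k => F (2*k+1)) :=
      hS.comp_injective (fun a b hab => by omega)
    rw [← tsum_even_add_odd he ho, ← Summable.tsum_add he ho]
    apply tsum_nonneg
    intro k
    have hk0 : (0:ℝ) ≤ (k:ℝ) := Nat.cast_nonneg k
    have hm1 : (-1:ℝ)^(2*k) = 1 := by rw [pow_mul]; norm_num
    have hm2 : (-1:ℝ)^(2*k+1) = -1 := by rw [pow_succ, pow_mul]; norm_num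
    have hcast1 : (2*((2*k : ℕ):ℝ)+1) = 4*(k:ℝ)+1 := by push_cast; ring
    have hcast2 : (2*((2*k+1 : ℕ):ℝ)+1) = 4*(k:ℝ)+3 := by push_cast; ring
    have hE1 : F (2*k) = 1/((4*(k:ℝ)+1)*h^2) *
        Real.exp (-((4*(k:ℝ)+1)^2*π^2*x)/(8*h^2)) := by
      rw [hFdef]
      simp only
      rw [hm1, hcast1]
    have hE2 : F (2*k+1) = -(1/((4*(k:ℝ)+3)*h^2) *
        Real.exp (-((4*(k:ℝ)+3)^2*π^2*x)/(8*h^2))) := by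
      rw [hFdef]
      simp only
      rw [hm2, hcast2]
      ring
    rw [hE1, hE2]
    rw [← sub_eq_add_neg, sub_nonneg]
    have hle : Real.exp (-((4*(k:ℝ)+3)^2*π^2*x)/(8*h^2))
        ≤ Real.exp (-((4*(k:ℝ)+1)^2*π^2*x)/(8*h^2)) := by
      apply Real.exp_le_exp.mpr
      rw [div_le_div_iff₀ (by positivity) (by positivity)]
      have hq1 : (4*(k:ℝ)+1)^2 ≤ (4*(k:ℝ)+3)^2 := by nlinarith
      have hq2 : (0:ℝ) ≤ π^2*x*(8*h^2) := by positivity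
      nlinarith [mul_le_mul_of_nonneg_right hq1 hq2]
    apply mul_le_mul _ hle (Real.exp_pos _).le (by positivity)
    rw [div_le_div_iff₀ (by positivity) (by positivity)]
    nlinarith
  -- Laplace transform, general formula
  have hintF : ∀ l : ℝ, 0 ≤ l →
      ∫ x in Set.Ioi (0:ℝ), Real.exp (-(l*x)) * g x
        = (4/π) * ∑' k : ℕ, (-1:ℝ)^k/((2*(k:ℝ)+1)*h^2) * (1/(l + (2*(k:ℝ)+1)^2*A)) := by
    intro l hl
    set G : ℕ → ℝ → ℝ :=
      fun k x => (-1:ℝ)^k/((2*(k:ℝ)+1)*h^2) * Real.exp (-((l+(2*(k:ℝ)+1)^2*A)*x)) with hGdef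
    have hd : ∀ k : ℕ, (0:ℝ) < l + (2*(k:ℝ)+1)^2*A := by
      intro k
      have hk0 : (0:ℝ) ≤ (k:ℝ) := Nat.cast_nonneg k
      have hq : (0:ℝ) < (2*(k:ℝ)+1)^2*A := mul_pos (by positivity) hA
      linarith
    have hcongr : ∀ x ∈ Set.Ioi (0:ℝ), Real.exp (-(l*x)) * g x = (4/π) * ∑' k, G k x := by
      intro x _
      rw [hg x]
      rw [show Real.exp (-(l*x)) * (4/π * ∑' k : ℕ, (-1 : ℝ) ^ k / ((2 * k + 1) * h ^ 2) *
            Real.exp (-((2 * k + 1) ^ 2 * π ^ 2 * x) / (8 * h ^ 2)))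
          = (4/π) * (∑' k : ℕ, Real.exp (-(l*x)) * ((-1 : ℝ) ^ k / ((2 * k + 1) * h ^ 2) *
            Real.exp (-((2 * k + 1) ^ 2 * π ^ 2 * x) / (8 * h ^ 2)))) by
          rw [tsum_mul_left]; ring]
      congr 1
      apply tsum_congr
      intro k
      rw [hGdef]
      simp only
      rw [show Real.exp (-(l*x)) * ((-1 : ℝ) ^ k / ((2 * k + 1) * h ^ 2) *
            Real.exp (-((2 * k + 1) ^ 2 * π ^ 2 * x) / (8 * h ^ 2)))
          = (-1 : ℝ) ^ k / ((2 * k + 1) * h ^ 2) * (Real.exp (-(l*x)) *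
            Real.exp (-((2 * k + 1) ^ 2 * π ^ 2 * x) / (8 * h ^ 2))) by ring]
      congr 1
      rw [← Real.exp_add]
      congr 1
      rw [hAdef]
      field_simp
      ring
    rw [setIntegral_congr_fun measurableSet_Ioi hcongr, MeasureTheory.integral_const_mul]
    congr 1
    have hGint : ∀ k, Integrable (G k) (volume.restrict (Set.Ioi (0:ℝ))) := by
      intro k
      apply Integrable.const_mul
      have h1 := exp_neg_integrableOn_Ioi 0 (hd k)
      simpa only [neg_mul, IntegrableOn] using h1
    have hGval : ∀ k, ∫ x in Set.Ioi (0:ℝ), G k x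
        = (-1:ℝ)^k/((2*(k:ℝ)+1)*h^2) * (1/(l + (2*(k:ℝ)+1)^2*A)) := by
      intro k
      simp only [hGdef]
      rw [MeasureTheory.integral_const_mul, myIntExp (hd k)]
    have hGnorm : ∀ k, ∫ x in Set.Ioi (0:ℝ), ‖G k x‖
        = 1/((2*(k:ℝ)+1)*h^2) * (1/(l + (2*(k:ℝ)+1)^2*A)) := by
      intro k
      have hptw : ∀ x : ℝ, ‖G k x‖
          = 1/((2*(k:ℝ)+1)*h^2) * Real.exp (-((l+(2*(k:ℝ)+1)^2*A)*x)) := by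
        intro x
        simp only [hGdef]
        rw [Real.norm_eq_abs, _root_.abs_mul, _root_.abs_div, _root_.abs_pow, _root_.abs_neg, _root_.abs_one, one_pow,
          _root_.abs_of_pos (by positivity : (0:ℝ) < (2*(k:ℝ)+1)*h^2),
          _root_.abs_of_pos (Real.exp_pos _)]
      simp only [hptw]
      rw [MeasureTheory.integral_const_mul, myIntExp (hd k)]
    have hGsum : Summable (fun k => ∫ x in Set.Ioi (0:ℝ), ‖G k x‖) := by
      have hbig : Summable (fun n : ℕ => (1/(h^2*A)) * (1/((n:ℝ)+1)^3)) := by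
        apply Summable.mul_left
        have h0 : Summable (fun n : ℕ => 1/(n:ℝ)^3) :=
          summable_one_div_nat_pow.mpr (by norm_num)
        have h1 := (summable_nat_add_iff 1).mpr h0
        simpa using h1
      apply Summable.of_nonneg_of_le _ _ hbig
      · intro k
        rw [hGnorm k]
        have := hd k
        positivity
      · intro k
        rw [hGnorm k]
        have hk0 : (0:ℝ) ≤ (k:ℝ) := Nat.cast_nonneg k
        have hd' := hd k
        rw [show (1:ℝ)/((2*(k:ℝ)+1)*h^2) * (1/(l + (2*(k:ℝ)+1)^2*A))
            = 1/(((2*(k:ℝ)+1)*h^2) * (l + (2*(k:ℝ)+1)^2*A)) by rw [div_mul_div_comm]; ring_nf]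
        rw [show (1:ℝ)/(h^2*A) * (1/((k:ℝ)+1)^3) = 1/((h^2*A) * ((k:ℝ)+1)^3) by
          rw [div_mul_div_comm]; ring_nf]
        apply one_div_le_one_div_of_le (by positivity)
        have hcube : ((k:ℝ)+1)^3 ≤ (2*(k:ℝ)+1)*(2*(k:ℝ)+1)^2 := by nlinarith
        have hrest : (2*(k:ℝ)+1)^2*A ≤ l + (2*(k:ℝ)+1)^2*A := by linarith
        calc h^2*A * ((k:ℝ)+1)^3 ≤ h^2*A * ((2*(k:ℝ)+1)*(2*(k:ℝ)+1)^2) := by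
              apply mul_le_mul_of_nonneg_left hcube (by positivity)
          _ = ((2*(k:ℝ)+1)*h^2) * ((2*(k:ℝ)+1)^2*A) := by ring
          _ ≤ ((2*(k:ℝ)+1)*h^2) * (l + (2*(k:ℝ)+1)^2*A) := by
              apply mul_le_mul_of_nonneg_left hrest (by positivity)
    have hkey := MeasureTheory.integral_tsum_of_summable_integral_norm hGint hGsum
    rw [← hkey]
    exact tsum_congr hGval
  -- Part 3 : total mass
  have hG3 : (∫ x in Set.Ioi (0 : ℝ), g x) = 1 := by
    have h0 := hintF 0 le_rfl
    simp only [zero_mul, neg_zero, Real.exp_zero, one_mul] at h0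
    have hterm : ∀ k : ℕ, (-1:ℝ)^k/((2*(k:ℝ)+1)*h^2) * (1/(0 + (2*(k:ℝ)+1)^2*A))
        = (1/(h^2*A)) * ((-1:ℝ)^k/(2*(k:ℝ)+1)^3) := by
      intro k
      have hk0 : (0:ℝ) ≤ (k:ℝ) := Nat.cast_nonneg k
      rw [zero_add]
      field_simp
    rw [tsum_congr hterm, tsum_mul_left, myBeta3] at h0
    rw [h0, hAdef]
    field_simp
    ring
  refine ⟨hsum, hpos, hG3, ?_⟩
  -- Part 4 : Laplace transform
  intro l hl
  have hsl : (0:ℝ) < Real.sqrt (2*l) := Real.sqrt_pos.mpr (by linarith)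
  have hb : (0:ℝ) < 2*h*Real.sqrt (2*l)/π := by
    apply div_pos _ Real.pi_pos
    positivity
  set b : ℝ := 2*h*Real.sqrt (2*l)/π with hbdef
  have hb2 : b^2 = l/A := by
    rw [hbdef, hAdef]
    rw [div_pow, mul_pow, mul_pow, Real.sq_sqrt (by linarith : (0:ℝ) ≤ 2*l)]
    field_simp
    ring
  have hAb2 : A*b^2 = l := by
    rw [hb2]
    field_simp
  have hπb : π*b/2 = h*Real.sqrt (2*l) := by
    rw [hbdef]
    field_simp
  have h4 := hintF l (le_of_lt hl)
  have hterm : ∀ k : ℕ, (-1:ℝ)^k/((2*(k:ℝ)+1)*h^2) * (1/(l + (2*(k:ℝ)+1)^2*A))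
      = (1/(h^2*A)) * ((-1:ℝ)^k/((2*(k:ℝ)+1)*((2*(k:ℝ)+1)^2 + b^2))) := by
    intro k
    have hk0 : (0:ℝ) ≤ (k:ℝ) := Nat.cast_nonneg k
    have hden : l + (2*(k:ℝ)+1)^2*A = A*((2*(k:ℝ)+1)^2 + b^2) := by
      rw [mul_add, hAb2]
      ring
    rw [hden]
    field_simp
  rw [tsum_congr hterm, tsum_mul_left, mySeriesII b hb, hπb] at h4
  have hfix : ∀ x : ℝ, Real.exp (-l*x) = Real.exp (-(l*x)) := by
    intro x; rw [neg_mul]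
  simp only [hfix]
  rw [h4]
  rw [show (4/π)*((1/(h^2*A))*(π/(4*b^2)*(1 - 1/Real.cosh (h*Real.sqrt (2*l)))))
      = (1/(h^2*(A*b^2)))*(1 - 1/Real.cosh (h*Real.sqrt (2*l))) by
    field_simp]
  rw [hAb2]


end
end
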